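/- Let d, k, ℓ be integers with 1 ≤ ℓ ≤ k - 4 and k ≤ d. If ℓ ≤ ⌈(d-1)/2⌉ - 1, then d + √(d·ℓ) - (1/2)(k - ℓ)(2d - k - ℓ + 1) < 0. -/
import Mathlib


theorem stmt_14 (d k ℓ : ℤ) (hℓ1 : 1 ≤ ℓ) (hℓ2 : ℓ ≤ k - 4) (hkd : k ≤ d)
    (hℓ3 : ℓ ≤ ⌈(((d : ℝ) - 1) / 2)⌉ - 1) :
    (d : ℝ) + Real.sqrt ((d : ℝ) * (ℓ : ℝ))
      - (1/2) * ((k : ℝ) - ℓ) * (2 * (d : ℝ) - k - ℓ + 1) < 0 := by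
  -- derive d ≥ 2ℓ + 2
  have hceil : (⌈(((d : ℝ) - 1) / 2)⌉ : ℝ) < ((d : ℝ) - 1) / 2 + 1 :=
    Int.ceil_lt_add_one _
  have hℓ3' : (ℓ : ℝ) + 1 ≤ (⌈(((d : ℝ) - 1) / 2)⌉ : ℝ) := by
    have : (ℓ : ℤ) + 1 ≤ ⌈(((d : ℝ) - 1) / 2)⌉ := by omega
    exact_mod_cast this
  have hdl : (2 : ℝ) * ℓ + 1 < (d : ℝ) := by linarith
  have hdlZ : 2 * ℓ + 2 ≤ d := by
    have : 2 * ℓ + 1 < d := by exact_mod_cast hdl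
    omega
  -- AM-GM strict: sqrt(dℓ) < (d+ℓ)/2
  have hld : ℓ < d := by omega
  have hldR : (ℓ : ℝ) < d := by exact_mod_cast hld
  have hℓpos : (0 : ℝ) < ℓ := by exact_mod_cast hℓ1
  have hsqrt : Real.sqrt ((d : ℝ) * ℓ) < ((d : ℝ) + ℓ) / 2 := by
    rw [show ((d : ℝ) + ℓ) / 2 = Real.sqrt ((((d : ℝ) + ℓ) / 2) ^ 2) by
      rw [Real.sqrt_sq (by linarith)]]
    apply Real.sqrt_lt_sqrt (by nlinarith)
    nlinarith [sq_nonneg ((d : ℝ) - ℓ)]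
  -- integer quadratic inequality
  have hkey : 3 * d + ℓ ≤ (k - ℓ) * (2 * d - k - ℓ + 1) := by
    nlinarith [mul_nonneg (by omega : (0:ℤ) ≤ k - ℓ - 4) (by omega : (0:ℤ) ≤ d - k),
      mul_nonneg (by omega : (0:ℤ) ≤ d - ℓ - 4) (by omega : (0:ℤ) ≤ d - 2*ℓ - 2)]
  have hkeyR : 3 * (d : ℝ) + ℓ ≤ ((k : ℝ) - ℓ) * (2 * (d : ℝ) - k - ℓ + 1) := by
    exact_mod_cast hkey
  linarith
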